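/- Let f, g : ℝ → ℝ be even functions with ∫_ℝ |f(x)|(x² ∨ 1) dx < ∞ and ∫_ℝ |g(x)|(x² ∨ 1) dx < ∞, and suppose ∫_ℝ f(x) dx ≠ 0. Let (σ_n) be positive reals with σ_n → ∞ and (h_n) real numbers, and suppose the limit a := lim_{n→∞} σ_n² · E[f(h_n + σ_n Z)] exists and is finite. Then (i) lim_{n→∞} σ_n e^{−(h_n/σ_n)²/2}/√(2π) = a / ∫_ℝ f(x) dx, and (ii) if moreover a ≠ 0, then lim_{n→∞} E[g(h_n + σ_n Z)] / E[f(h_n + σ_n Z)] = (∫_ℝ g(x) dx) / (∫_ℝ f(x) dx). -/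

import Mathlib

open MeasureTheory Filter

/-- Standard Gaussian density. -/
noncomputable def stdGauss (z : ℝ) : ℝ := Real.exp (-z ^ 2 / 2) / Real.sqrt (2 * Real.pi)

/-- Gaussian expectation `E[f(h + σ Z)]` for a standard Gaussian `Z`. -/
noncomputable def gexp (f : ℝ → ℝ) (σ h : ℝ) : ℝ := ∫ z, f (h + σ * z) * stdGauss z

lemma sqrt_two_pi_ge_two : (2 : ℝ) ≤ Real.sqrt (2 * Real.pi) := by
  have h4 : (4 : ℝ) ≤ 2 * Real.pi := by nlinarith [Real.pi_gt_three]
  calc (2 : ℝ) = Real.sqrt 4 := by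
        rw [show (4 : ℝ) = 2 ^ 2 by norm_num, Real.sqrt_sq (by norm_num)]
    _ ≤ Real.sqrt (2 * Real.pi) := Real.sqrt_le_sqrt h4

lemma stdGauss_nonneg (z : ℝ) : 0 ≤ stdGauss z := by
  unfold stdGauss
  positivity

lemma stdGauss_even (z : ℝ) : stdGauss (-z) = stdGauss z := by
  unfold stdGauss
  rw [neg_pow]
  norm_num

lemma stdGauss_le_one (z : ℝ) : stdGauss z ≤ 1 := by
  unfold stdGauss
  rw [div_le_one (by positivity)]
  calc Real.exp (-z ^ 2 / 2) ≤ 1 := by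
        rw [Real.exp_le_one_iff]
        nlinarith [sq_nonneg z]
    _ ≤ Real.sqrt (2 * Real.pi) := by linarith [sqrt_two_pi_ge_two]

lemma continuous_stdGauss : Continuous stdGauss := by
  unfold stdGauss
  exact (Real.continuous_exp.comp (by continuity)).div_const _

lemma hasDerivAt_stdGauss (z : ℝ) : HasDerivAt stdGauss (-z * stdGauss z) z := by
  have h1 : HasDerivAt (fun z : ℝ => -z ^ 2 / 2) (-z) z := by
    have := ((hasDerivAt_pow 2 z).neg).div_const 2
    refine this.congr_deriv ?_
    simp; ring
  have h2 := (h1.exp).div_const (Real.sqrt (2 * Real.pi))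
  refine h2.congr_deriv ?_
  unfold stdGauss
  ring

lemma hasDerivAt_stdGauss' (z : ℝ) :
    HasDerivAt (fun t => -t * stdGauss t) ((z ^ 2 - 1) * stdGauss z) z := by
  have h := ((hasDerivAt_id z).neg).mul (hasDerivAt_stdGauss z)
  refine h.congr_deriv ?_
  simp only [Pi.neg_apply, id_eq]
  ring

lemma stdGauss_snd_deriv_bound (z : ℝ) : |(z ^ 2 - 1) * stdGauss z| ≤ 1 := by
  have hs := sqrt_two_pi_ge_two
  have hs0 : (0 : ℝ) < Real.sqrt (2 * Real.pi) := by linarith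
  have key : |z ^ 2 - 1| * Real.exp (-z ^ 2 / 2) ≤ 2 := by
    have hE := Real.exp_pos (-z ^ 2 / 2)
    rcases le_or_gt (z ^ 2) 1 with hz | hz
    · have h1 : |z ^ 2 - 1| ≤ 1 := by
        rw [abs_le]; constructor <;> nlinarith [sq_nonneg z]
      have h2 : Real.exp (-z ^ 2 / 2) ≤ 1 := by
        rw [Real.exp_le_one_iff]; nlinarith [sq_nonneg z]
      nlinarith [abs_nonneg (z ^ 2 - 1)]
    · have h1 : |z ^ 2 - 1| = z ^ 2 - 1 := abs_of_pos (by linarith)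
      have h2 : Real.exp (-z ^ 2 / 2) * Real.exp (z ^ 2 / 2) = 1 := by
        rw [← Real.exp_add, show -z ^ 2 / 2 + z ^ 2 / 2 = 0 by ring, Real.exp_zero]
      have h3 : 1 + z ^ 2 / 2 ≤ Real.exp (z ^ 2 / 2) := by
        have := Real.add_one_le_exp (z ^ 2 / 2); linarith
      rw [h1]
      nlinarith [mul_le_mul_of_nonneg_left h3 hE.le]
  rw [abs_mul, abs_of_nonneg (stdGauss_nonneg z)]
  unfold stdGauss
  rw [← mul_div_assoc, div_le_one hs0]
  linarith

/-- Lipschitz bound for the derivative of the Gaussian density. -/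
lemma stdGauss_deriv_lipschitz (u v : ℝ) :
    |(-u * stdGauss u) - (-v * stdGauss v)| ≤ 1 * |u - v| := by
  have := Convex.norm_image_sub_le_of_norm_hasDerivWithin_le
    (f := fun t => -t * stdGauss t) (f' := fun t => (t ^ 2 - 1) * stdGauss t)
    (s := Set.univ) (C := 1)
    (fun x _ => (hasDerivAt_stdGauss' x).hasDerivWithinAt)
    (fun x _ => by rw [Real.norm_eq_abs]; exact stdGauss_snd_deriv_bound x)
    convex_univ (Set.mem_univ v) (Set.mem_univ u)
  simpa [Real.norm_eq_abs] using this

lemma avg_bound_aux (u δ : ℝ) (hδ : 0 ≤ δ) :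
    |stdGauss (u + δ) + stdGauss (u - δ) - 2 * stdGauss u| ≤ 2 * δ ^ 2 := by
  set F : ℝ → ℝ := fun t => stdGauss (u + t) + stdGauss (u - t) with hF
  set F' : ℝ → ℝ := fun t => (-(u + t) * stdGauss (u + t)) - (-(u - t) * stdGauss (u - t))
    with hF'
  have hder : ∀ t : ℝ, HasDerivAt F (F' t) t := by
    intro t
    have h1 : HasDerivAt (fun t : ℝ => stdGauss (u + t)) (-(u + t) * stdGauss (u + t)) t := by
      have := (hasDerivAt_stdGauss (u + t)).comp t ((hasDerivAt_const t u).add (hasDerivAt_id t))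
      exact this.congr_deriv (by ring)
    have h2 : HasDerivAt (fun t : ℝ => stdGauss (u - t)) (-(-(u - t) * stdGauss (u - t))) t := by
      have := (hasDerivAt_stdGauss (u - t)).comp t ((hasDerivAt_const t u).sub (hasDerivAt_id t))
      refine this.congr_deriv ?_
      ring
    exact (h1.add h2).congr_deriv (by simp only [F']; ring)
  have hbound : ∀ t ∈ Set.Ico (0 : ℝ) δ, ‖F' t‖ ≤ 2 * δ := by
    intro t ht
    have h1 := stdGauss_deriv_lipschitz (u + t) (u - t)
    have h2 : |(u + t) - (u - t)| = 2 * t := by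
      rw [show (u + t) - (u - t) = 2 * t by ring, abs_of_nonneg (by linarith [ht.1])]
    rw [Real.norm_eq_abs]
    calc |F' t| ≤ 1 * |(u + t) - (u - t)| := h1
      _ = 2 * t := by rw [h2]; ring
      _ ≤ 2 * δ := by linarith [ht.2.le]
  have key := norm_image_sub_le_of_norm_deriv_le_segment'
    (f := F) (f' := F') (a := 0) (b := δ) (C := 2 * δ)
    (fun x _ => (hder x).hasDerivWithinAt) hbound δ (Set.right_mem_Icc.2 hδ)
  have hF0 : F 0 = 2 * stdGauss u := by simp [F]; ring
  rw [hF0] at key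
  rw [Real.norm_eq_abs] at key
  calc |stdGauss (u + δ) + stdGauss (u - δ) - 2 * stdGauss u| = |F δ - 2 * stdGauss u| := rfl
    _ ≤ 2 * δ * (δ - 0) := key
    _ = 2 * δ ^ 2 := by ring

lemma avg_bound (u δ : ℝ) :
    |stdGauss (u + δ) + stdGauss (u - δ) - 2 * stdGauss u| ≤ 2 * δ ^ 2 := by
  rcases le_or_gt 0 δ with hδ | hδ
  · exact avg_bound_aux u δ hδ
  · have := avg_bound_aux u (-δ) (by linarith)
    have e1 : u + -δ = u - δ := by ring
    have e2 : u - -δ = u + δ := by ring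
    rw [e1, e2, neg_pow] at this
    calc |stdGauss (u + δ) + stdGauss (u - δ) - 2 * stdGauss u|
        = |stdGauss (u - δ) + stdGauss (u + δ) - 2 * stdGauss u| := by ring_nf
      _ ≤ 2 * δ ^ 2 := by simpa using this

/-- Change of variables for the Gaussian expectation. -/
lemma gexp_eq (f : ℝ → ℝ) (σ h : ℝ) (hσ : 0 < σ) :
    gexp f σ h = σ⁻¹ * ∫ x, f x * stdGauss ((x - h) / σ) := by
  set G : ℝ → ℝ := fun x => f x * stdGauss ((x - h) / σ) with hG
  have e1 : ∀ z : ℝ, f (h + σ * z) * stdGauss z = G (h + σ * z) := by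
    intro z
    simp only [G]
    congr 2
    field_simp
    ring
  have e2 : (∫ z, G (h + σ * z)) = |σ⁻¹| • ∫ y, G (h + y) :=
    MeasureTheory.Measure.integral_comp_mul_left (fun y => G (h + y)) σ
  have e3 : (∫ y, G (h + y)) = ∫ y, G y :=
    MeasureTheory.integral_add_left_eq_self (μ := volume) G h
  unfold gexp
  simp_rw [e1]
  rw [e2, e3, smul_eq_mul, abs_of_pos (inv_pos.2 hσ)]

/-- Main estimate: the smoothed integral is close to `stdGauss (h/σ) * ∫ f`. -/
lemma main_bound (f : ℝ → ℝ) (hfe : ∀ x, f (-x) = f x)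
    (hIf : Integrable f) (hIfx2 : Integrable (fun x => f x * x ^ 2))
    (σ h : ℝ) (hσ : 0 < σ) :
    |(∫ x, f x * stdGauss ((x - h) / σ)) - stdGauss (h / σ) * ∫ x, f x|
      ≤ σ⁻¹ ^ 2 * ∫ x, ‖f x * x ^ 2‖ := by
  have hcont : Continuous stdGauss := continuous_stdGauss
  have hmf : AEStronglyMeasurable f volume := hIf.aestronglyMeasurable
  have hInt : ∀ w : ℝ → ℝ, Continuous w → Integrable (fun x => f x * stdGauss (w x)) := by
    intro w hw
    refine hIf.norm.mono' (hmf.mul ((hcont.comp hw).aestronglyMeasurable)) ?_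
    filter_upwards with x
    rw [norm_mul]
    calc ‖f x‖ * ‖stdGauss (w x)‖ ≤ ‖f x‖ * 1 := by
          apply mul_le_mul_of_nonneg_left _ (norm_nonneg _)
          rw [Real.norm_eq_abs, abs_of_nonneg (stdGauss_nonneg _)]
          exact stdGauss_le_one _
      _ = ‖f x‖ := mul_one _
  have hIm : Integrable (fun x => f x * stdGauss ((x - h) / σ)) :=
    hInt (fun x => (x - h) / σ) (by continuity)
  have hIp : Integrable (fun x => f x * stdGauss ((x + h) / σ)) :=
    hInt (fun x => (x + h) / σ) (by continuity)
  -- symmetrization: the two integrals agree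
  have hA2 : (∫ x, f x * stdGauss ((x - h) / σ)) = ∫ x, f x * stdGauss ((x + h) / σ) := by
    rw [← MeasureTheory.integral_neg_eq_self (fun x => f x * stdGauss ((x - h) / σ)) volume]
    congr 1
    ext x
    rw [hfe]
    congr 1
    rw [show (-x - h) / σ = -((x + h) / σ) by ring, stdGauss_even]
  -- express the difference as a single integral
  have hDiff : (∫ x, f x * stdGauss ((x - h) / σ)) - stdGauss (h / σ) * ∫ x, f x
      = (∫ x, f x * (stdGauss ((x - h) / σ) + stdGauss ((x + h) / σ)
          - 2 * stdGauss (h / σ))) / 2 := by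
    have hsplit : (∫ x, f x * (stdGauss ((x - h) / σ) + stdGauss ((x + h) / σ)
        - 2 * stdGauss (h / σ)))
        = (∫ x, (f x * stdGauss ((x - h) / σ) + f x * stdGauss ((x + h) / σ))
            - f x * (2 * stdGauss (h / σ))) := by
      congr 1; ext x; ring
    have e4 : ∫ x, ((f x * stdGauss ((x - h) / σ) + f x * stdGauss ((x + h) / σ))
          - f x * (2 * stdGauss (h / σ)))
        = (∫ x, (f x * stdGauss ((x - h) / σ) + f x * stdGauss ((x + h) / σ)))
          - ∫ x, f x * (2 * stdGauss (h / σ)) :=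
      integral_sub (hIm.add hIp) (hIf.mul_const _)
    have e5 : ∫ x, (f x * stdGauss ((x - h) / σ) + f x * stdGauss ((x + h) / σ))
        = (∫ x, f x * stdGauss ((x - h) / σ)) + ∫ x, f x * stdGauss ((x + h) / σ) :=
      integral_add hIm hIp
    have e6 : ∫ x, f x * (2 * stdGauss (h / σ))
        = (∫ x, f x) * (2 * stdGauss (h / σ)) := integral_mul_const _ _
    rw [hsplit, e4, e5, e6, ← hA2]
    ring
  rw [hDiff]
  have hbd : |∫ x, f x * (stdGauss ((x - h) / σ) + stdGauss ((x + h) / σ)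
      - 2 * stdGauss (h / σ))| ≤ ∫ x, (2 * σ⁻¹ ^ 2) * ‖f x * x ^ 2‖ := by
    rw [← Real.norm_eq_abs]
    apply norm_integral_le_of_norm_le ((hIfx2.norm).const_mul _)
    filter_upwards with x
    rw [norm_mul]
    have hb : |stdGauss ((x - h) / σ) + stdGauss ((x + h) / σ) - 2 * stdGauss (h / σ)|
        ≤ 2 * (x / σ) ^ 2 := by
      have := avg_bound (h / σ) (x / σ)
      have e1 : h / σ + x / σ = (x + h) / σ := by ring
      have e2 : h / σ - x / σ = (h - x) / σ := by ring
      rw [e1, e2] at this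
      rw [show (h - x) / σ = -((x - h) / σ) by ring, stdGauss_even] at this
      calc |stdGauss ((x - h) / σ) + stdGauss ((x + h) / σ) - 2 * stdGauss (h / σ)|
          = |stdGauss ((x + h) / σ) + stdGauss ((x - h) / σ) - 2 * stdGauss (h / σ)| := by
            ring_nf
        _ ≤ 2 * (x / σ) ^ 2 := this
    calc ‖f x‖ * ‖stdGauss ((x - h) / σ) + stdGauss ((x + h) / σ) - 2 * stdGauss (h / σ)‖
        ≤ ‖f x‖ * (2 * (x / σ) ^ 2) := by
          apply mul_le_mul_of_nonneg_left _ (norm_nonneg _)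
          rw [Real.norm_eq_abs]; exact hb
      _ = (2 * σ⁻¹ ^ 2) * ‖f x * x ^ 2‖ := by
          rw [norm_mul, Real.norm_eq_abs (x ^ 2), abs_of_nonneg (sq_nonneg x), div_pow]
          field_simp
  rw [abs_div, abs_of_nonneg (by norm_num : (0:ℝ) ≤ 2), div_le_iff₀ (by norm_num : (0:ℝ) < 2)]
  calc |∫ x, f x * (stdGauss ((x - h) / σ) + stdGauss ((x + h) / σ) - 2 * stdGauss (h / σ))|
      ≤ ∫ x, (2 * σ⁻¹ ^ 2) * ‖f x * x ^ 2‖ := hbd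
    _ = (2 * σ⁻¹ ^ 2) * ∫ x, ‖f x * x ^ 2‖ := integral_const_mul _ _
    _ = σ⁻¹ ^ 2 * (∫ x, ‖f x * x ^ 2‖) * 2 := by ring

/-- Key limit: `σ² E[f(h+σZ)] - σ φ(h/σ) ∫f → 0`. -/
lemma key_tendsto (f : ℝ → ℝ) (hfe : ∀ x, f (-x) = f x)
    (hIf : Integrable f) (hIfx2 : Integrable (fun x => f x * x ^ 2))
    (σ : ℕ → ℝ) (hσpos : ∀ n, 0 < σ n) (hσ : Tendsto σ atTop atTop) (h : ℕ → ℝ) :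
    Tendsto (fun n => σ n ^ 2 * gexp f (σ n) (h n)
      - σ n * stdGauss (h n / σ n) * ∫ x, f x) atTop (nhds 0) := by
  set C : ℝ := ∫ x, ‖f x * x ^ 2‖ with hC
  have hC0 : 0 ≤ C := integral_nonneg fun x => norm_nonneg _
  have hbound : ∀ n, ‖σ n ^ 2 * gexp f (σ n) (h n)
      - σ n * stdGauss (h n / σ n) * ∫ x, f x‖ ≤ (σ n)⁻¹ * C := by
    intro n
    have hσn := hσpos n
    rw [gexp_eq f (σ n) (h n) hσn]
    have h1 : σ n ^ 2 * ((σ n)⁻¹ * ∫ x, f x * stdGauss ((x - h n) / σ n))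
        - σ n * stdGauss (h n / σ n) * ∫ x, f x
        = σ n * ((∫ x, f x * stdGauss ((x - h n) / σ n))
            - stdGauss (h n / σ n) * ∫ x, f x) := by
      field_simp
    rw [h1, Real.norm_eq_abs, abs_mul, abs_of_pos hσn]
    have hmb := main_bound f hfe hIf hIfx2 (σ n) (h n) hσn
    calc σ n * |(∫ x, f x * stdGauss ((x - h n) / σ n)) - stdGauss (h n / σ n) * ∫ x, f x|
        ≤ σ n * ((σ n)⁻¹ ^ 2 * C) := mul_le_mul_of_nonneg_left hmb hσn.le
      _ = (σ n)⁻¹ * C := by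
          field_simp
  have hlim : Tendsto (fun n => (σ n)⁻¹ * C) atTop (nhds 0) := by
    have := hσ.inv_tendsto_atTop.mul_const C
    simpa using this
  exact squeeze_zero_norm hbound hlim

theorem stmt_2 (f g : ℝ → ℝ) (hfe : ∀ x, f (-x) = f x) (hge : ∀ x, g (-x) = g x)
    (hfint : Integrable (fun x => f x * (x ^ 2 ⊔ 1)))
    (hgint : Integrable (fun x => g x * (x ^ 2 ⊔ 1)))
    (hf0 : (∫ x, f x) ≠ 0)
    (σ : ℕ → ℝ) (hσpos : ∀ n, 0 < σ n) (hσ : Tendsto σ atTop atTop)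
    (h : ℕ → ℝ) (a : ℝ)
    (ha : Tendsto (fun n => (σ n) ^ 2 * gexp f (σ n) (h n)) atTop (nhds a)) :
    Tendsto (fun n => σ n * Real.exp (-(h n / σ n) ^ 2 / 2) / Real.sqrt (2 * Real.pi))
        atTop (nhds (a / ∫ x, f x)) ∧
      (a ≠ 0 →
        Tendsto (fun n => gexp g (σ n) (h n) / gexp f (σ n) (h n)) atTop
          (nhds ((∫ x, g x) / ∫ x, f x))) := by
  -- basic integrability facts
  have hmax_pos : ∀ x : ℝ, (0 : ℝ) < x ^ 2 ⊔ 1 :=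
    fun x => lt_of_lt_of_le one_pos (le_max_right _ _)
  have meas_aux : ∀ (F : ℝ → ℝ), Integrable (fun x => F x * (x ^ 2 ⊔ 1)) →
      AEStronglyMeasurable F volume := by
    intro F hF
    have hcont : Continuous fun x : ℝ => (x ^ 2 ⊔ 1)⁻¹ :=
      ((continuous_pow 2).max continuous_const).inv₀ fun x => (hmax_pos x).ne'
    have heq : (fun x => (F x * (x ^ 2 ⊔ 1)) * (x ^ 2 ⊔ 1)⁻¹) = F := by
      ext x
      rw [mul_assoc, mul_inv_cancel₀ (hmax_pos x).ne', mul_one]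
    rw [← heq]
    exact hF.aestronglyMeasurable.mul hcont.aestronglyMeasurable
  have int_aux : ∀ (F : ℝ → ℝ), Integrable (fun x => F x * (x ^ 2 ⊔ 1)) →
      Integrable F := by
    intro F hF
    refine hF.norm.mono' (meas_aux F hF) ?_
    filter_upwards with x
    rw [norm_mul]
    nth_rewrite 1 [← mul_one ‖F x‖]
    apply mul_le_mul_of_nonneg_left _ (norm_nonneg _)
    rw [Real.norm_eq_abs, abs_of_pos (hmax_pos x)]
    exact le_max_right _ _
  have int_aux2 : ∀ (F : ℝ → ℝ), Integrable (fun x => F x * (x ^ 2 ⊔ 1)) →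
      Integrable (fun x => F x * x ^ 2) := by
    intro F hF
    refine hF.norm.mono' ((meas_aux F hF).mul (continuous_pow 2).aestronglyMeasurable) ?_
    filter_upwards with x
    rw [norm_mul, norm_mul]
    apply mul_le_mul_of_nonneg_left _ (norm_nonneg _)
    rw [Real.norm_eq_abs, Real.norm_eq_abs, abs_of_pos (hmax_pos x),
      abs_of_nonneg (sq_nonneg x)]
    exact le_max_left _ _
  have hIf := int_aux f hfint
  have hIfx2 := int_aux2 f hfint
  have hIg := int_aux g hgint
  have hIgx2 := int_aux2 g hgint
  -- key limits
  have hEf := key_tendsto f hfe hIf hIfx2 σ hσpos hσ h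
  have hEg := key_tendsto g hge hIg hIgx2 σ hσpos hσ h
  have keyf : Tendsto (fun n => σ n * stdGauss (h n / σ n) * ∫ x, f x) atTop (nhds a) := by
    have := ha.sub hEf
    rw [sub_zero] at this
    exact this.congr fun n => by ring
  have hphi : Tendsto (fun n => σ n * stdGauss (h n / σ n)) atTop
      (nhds (a / ∫ x, f x)) := by
    have := keyf.div_const (∫ x, f x)
    exact this.congr fun n => mul_div_cancel_right₀ _ hf0
  constructor
  · refine hphi.congr fun n => ?_
    unfold stdGauss
    rw [mul_div_assoc]
  · intro ha0
    have hg2 : Tendsto (fun n => σ n ^ 2 * gexp g (σ n) (h n)) atTop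
        (nhds (0 + (a / ∫ x, f x) * ∫ x, g x)) := by
      have := hEg.add (hphi.mul_const (∫ x, g x))
      exact this.congr fun n => by ring
    have hdiv := hg2.div ha ha0
    have hval : (0 + (a / ∫ x, f x) * ∫ x, g x) / a = (∫ x, g x) / ∫ x, f x := by
      field_simp
      ring
    rw [hval] at hdiv
    refine hdiv.congr fun n => ?_
    exact mul_div_mul_left _ _ (pow_ne_zero 2 (hσpos n).ne')
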